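/- There is a constant c_k > 0 such that the number of quadruples (A₁, A₂, B₁, B₂) of k-element subsets of {1,…,N}, where A₁ and A₂ have distinct distance sets (A₁ - min A₁ ≠ A₂ - min A₂), B₁ - min B₁ = A₁ - min A₁, B₂ - min B₂ = A₂ - min A₂, the four minima min A₁, min A₂, min B₁, min B₂ are pairwise distinct, and A₁ + A₂ = B₁ + B₂, is at least c_k · N^{2k+1} for all sufficiently large N. -/

import Mathlib

open Finset Pointwise

/-- The minimum of a finite set of integers (with junk value `0` for the empty set). -/
def minOf (A : Finset ℤ) : ℤ := A.min.getD 0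

/-- The distance set of a finite set of integers: the set translated so its minimum is `0`. -/
def distSet (A : Finset ℤ) : Finset ℤ := A.image (fun x => x - minOf A)

lemma minOf_eq_min' (A : Finset ℤ) (h : A.Nonempty) : minOf A = A.min' h := by
  rw [minOf, ← Finset.coe_min' h]; rfl

lemma mem_singleton_add {t y : ℤ} {D : Finset ℤ} :
    y ∈ ({t} : Finset ℤ) + D ↔ ∃ x ∈ D, y = t + x := by
  simp only [Finset.mem_add, Finset.mem_singleton]
  constructor
  · rintro ⟨u, rfl, x, hx, rfl⟩; exact ⟨x, hx, rfl⟩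
  · rintro ⟨x, hx, rfl⟩; exact ⟨t, rfl, x, hx, rfl⟩

lemma minOf_trans (t : ℤ) (S : Finset ℤ) (hS : ∀ x ∈ S, 1 ≤ x) :
    minOf (({t} : Finset ℤ) + insert 0 S) = t := by
  have hne : (({t} : Finset ℤ) + insert 0 S).Nonempty :=
    ⟨t, mem_singleton_add.2 ⟨0, Finset.mem_insert_self 0 S, (add_zero t).symm⟩⟩
  rw [minOf_eq_min' _ hne]
  apply le_antisymm
  · exact Finset.min'_le _ _ (mem_singleton_add.2 ⟨0, Finset.mem_insert_self 0 S, (add_zero t).symm⟩)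
  · apply Finset.le_min'
    intro y hy
    obtain ⟨x, hx, rfl⟩ := mem_singleton_add.1 hy
    rcases Finset.mem_insert.1 hx with rfl | hx
    · omega
    · have := hS x hx; omega

lemma distSet_trans (t : ℤ) (S : Finset ℤ) (hS : ∀ x ∈ S, 1 ≤ x) :
    distSet (({t} : Finset ℤ) + insert 0 S) = insert 0 S := by
  rw [distSet, minOf_trans t S hS]
  ext y
  simp only [Finset.mem_image]
  constructor
  · rintro ⟨z, hz, rfl⟩
    obtain ⟨x, hx, rfl⟩ := mem_singleton_add.1 hz
    simpa using hx
  · intro hy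
    exact ⟨t + y, mem_singleton_add.2 ⟨y, hy, rfl⟩, by ring⟩

lemma trans_inj {t₁ t₂ : ℤ} {S₁ S₂ : Finset ℤ} (h₁ : ∀ x ∈ S₁, 1 ≤ x) (h₂ : ∀ x ∈ S₂, 1 ≤ x)
    (h : ({t₁} : Finset ℤ) + insert 0 S₁ = ({t₂} : Finset ℤ) + insert 0 S₂) :
    t₁ = t₂ ∧ S₁ = S₂ := by
  have hm := congrArg minOf h
  rw [minOf_trans t₁ S₁ h₁, minOf_trans t₂ S₂ h₂] at hm
  have hd := congrArg distSet h
  rw [distSet_trans t₁ S₁ h₁, distSet_trans t₂ S₂ h₂] at hd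
  refine ⟨hm, ?_⟩
  have h0₁ : (0:ℤ) ∉ S₁ := fun h0 => by have := h₁ 0 h0; omega
  have h0₂ : (0:ℤ) ∉ S₂ := fun h0 => by have := h₂ 0 h0; omega
  have := congrArg (fun s => Finset.erase s 0) hd
  simpa [Finset.erase_insert h0₁, Finset.erase_insert h0₂] using this

lemma insert_zero_ne {S₁ S₂ : Finset ℤ} (h₁ : ∀ x ∈ S₁, 1 ≤ x) (h₂ : ∀ x ∈ S₂, 1 ≤ x)
    (h : S₁ ≠ S₂) : insert (0:ℤ) S₁ ≠ insert 0 S₂ := by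
  intro hd
  apply h
  have h0₁ : (0:ℤ) ∉ S₁ := fun h0 => by have := h₁ 0 h0; omega
  have h0₂ : (0:ℤ) ∉ S₂ := fun h0 => by have := h₂ 0 h0; omega
  have := congrArg (fun s => Finset.erase s 0) hd
  simpa [Finset.erase_insert h0₁, Finset.erase_insert h0₂] using this

lemma card_trans (t : ℤ) (D : Finset ℤ) : (({t} : Finset ℤ) + D).card = D.card := by
  rw [Finset.singleton_add]
  exact Finset.card_vadd_finset t D

lemma trans_subset {t : ℤ} {S : Finset ℤ} {M N : ℤ} (hS : S ⊆ Finset.Icc 1 M) (hM : 0 ≤ M)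
    (ht : 1 ≤ t) (htM : t + M ≤ N) : ({t} : Finset ℤ) + insert 0 S ⊆ Finset.Icc 1 N := by
  intro y hy
  obtain ⟨x, hx, rfl⟩ := mem_singleton_add.1 hy
  rcases Finset.mem_insert.1 hx with rfl | hx
  · simp only [Finset.mem_Icc]; omega
  · have := Finset.mem_Icc.1 (hS hx)
    simp only [Finset.mem_Icc]
    omega

theorem count_Cprime_lower (k : ℕ) (hk : 2 ≤ k) :
    ∃ c : ℝ, 0 < c ∧ ∃ N₀ : ℕ, ∀ N : ℕ, N₀ ≤ N →
      c * (N : ℝ) ^ (2 * k + 1) ≤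
      ((((((Finset.Icc (1 : ℤ) N).powersetCard k) ×ˢ ((Finset.Icc (1 : ℤ) N).powersetCard k)) ×ˢ
          (((Finset.Icc (1 : ℤ) N).powersetCard k) ×ˢ ((Finset.Icc (1 : ℤ) N).powersetCard k))).filter
        (fun q => distSet q.1.1 ≠ distSet q.1.2 ∧
                  distSet q.2.1 = distSet q.1.1 ∧
                  distSet q.2.2 = distSet q.1.2 ∧
                  minOf q.1.1 ≠ minOf q.1.2 ∧ minOf q.1.1 ≠ minOf q.2.1 ∧
                  minOf q.1.1 ≠ minOf q.2.2 ∧ minOf q.1.2 ≠ minOf q.2.1 ∧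
                  minOf q.1.2 ≠ minOf q.2.2 ∧ minOf q.2.1 ≠ minOf q.2.2 ∧
                  q.1.1 + q.1.2 = q.2.1 + q.2.2)).card : ℝ) := by
  have hq0 : (0:ℝ) < ((k-1).factorial : ℝ) := by exact_mod_cast Nat.factorial_pos (k-1)
  refine ⟨1 / (7^(2*k+1) * 2^(2*k+1) * (((k-1).factorial : ℝ))^2),
    one_div_pos.mpr (mul_pos (mul_pos (by positivity) (by positivity)) (pow_pos hq0 2)),
    42 * Nat.factorial (k+1), ?_⟩
  intro N hN
  set Q := (((((Finset.Icc (1 : ℤ) N).powersetCard k) ×ˢ ((Finset.Icc (1 : ℤ) N).powersetCard k)) ×ˢ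
          (((Finset.Icc (1 : ℤ) N).powersetCard k) ×ˢ ((Finset.Icc (1 : ℤ) N).powersetCard k))).filter
        (fun q => distSet q.1.1 ≠ distSet q.1.2 ∧
                  distSet q.2.1 = distSet q.1.1 ∧
                  distSet q.2.2 = distSet q.1.2 ∧
                  minOf q.1.1 ≠ minOf q.1.2 ∧ minOf q.1.1 ≠ minOf q.2.1 ∧
                  minOf q.1.1 ≠ minOf q.2.2 ∧ minOf q.1.2 ≠ minOf q.2.1 ∧
                  minOf q.1.2 ≠ minOf q.2.2 ∧ minOf q.2.1 ≠ minOf q.2.2 ∧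
                  q.1.1 + q.1.2 = q.2.1 + q.2.2)) with hQdef
  set M : ℕ := N / 6 with hMdef
  have hfact : 6 ≤ Nat.factorial (k+1) := by
    calc 6 = Nat.factorial 3 := rfl
    _ ≤ Nat.factorial (k+1) := Nat.factorial_le (by omega)
  have hfact2 : 2*k + 2 ≤ 6 * Nat.factorial (k+1) := by
    have : k + 1 ≤ Nat.factorial (k+1) := Nat.self_le_factorial _
    omega
  have hMF : 6 * Nat.factorial (k+1) ≤ M := by omega
  have hMk : 2*k + 2 ≤ M := le_trans hfact2 hMF
  have h6M : 6 * M ≤ N := by omega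
  have h7M : N ≤ 7 * M := by omega
  set Mz : ℤ := (M : ℤ) with hMz
  have hMz0 : (0:ℤ) ≤ Mz := by omega
  have hNz : 6 * Mz ≤ (N:ℤ) := by omega
  have hkz : ((k:ℤ)) - 1 ≤ Mz := by omega
  set P1 := (Finset.Icc (1:ℤ) Mz).powersetCard (k-1) with hP1
  set T := (Finset.Icc (4*Mz+1) (5*Mz)) ×ˢ ((Finset.Icc (1:ℤ) Mz) ×ˢ (Finset.Icc (Mz+1) (2*Mz))) with hT
  set P := P1.offDiag ×ˢ T with hP
  set φ : (Finset ℤ × Finset ℤ) × (ℤ × ℤ × ℤ) → (Finset ℤ × Finset ℤ) × (Finset ℤ × Finset ℤ) :=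
    fun p => (({p.2.1} + insert 0 p.1.1, {p.2.2.1} + insert 0 p.1.2),
              ({p.2.2.2} + insert 0 p.1.1, {p.2.1 + p.2.2.1 - p.2.2.2} + insert 0 p.1.2)) with hφ
  -- membership of one translated set in the powersetCard
  have hmemQ : ∀ (t : ℤ) (S : Finset ℤ), S ⊆ Finset.Icc 1 Mz → S.card = k - 1 →
      1 ≤ t → t ≤ 5*Mz → ({t} : Finset ℤ) + insert 0 S ∈ (Finset.Icc (1:ℤ) (N:ℤ)).powersetCard k := by
    intro t S hsub hcard ht1 ht2
    rw [Finset.mem_powersetCard]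
    refine ⟨trans_subset hsub hMz0 ht1 (by omega), ?_⟩
    rw [card_trans, Finset.card_insert_of_notMem
      (fun h => by have := (Finset.mem_Icc.1 (hsub h)).1; omega), hcard]
    omega
  -- the injection maps into Q
  have hmem : ∀ p ∈ P, φ p ∈ Q := by
    intro p hp
    obtain ⟨⟨S₁, S₂⟩, a, b, b'⟩ := p
    simp only [hP, hT, hP1, Finset.mem_product, Finset.mem_offDiag, Finset.mem_powersetCard,
      Finset.mem_Icc] at hp
    obtain ⟨⟨⟨hS₁sub, hS₁card⟩, ⟨hS₂sub, hS₂card⟩, hS₁₂⟩, ⟨ha1, ha2⟩, ⟨hb1, hb2⟩, hb'1, hb'2⟩ := hp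
    have hpos₁ : ∀ x ∈ S₁, 1 ≤ x := fun x hx => (Finset.mem_Icc.1 (hS₁sub hx)).1
    have hpos₂ : ∀ x ∈ S₂, 1 ≤ x := fun x hx => (Finset.mem_Icc.1 (hS₂sub hx)).1
    rw [hQdef, Finset.mem_filter]
    constructor
    · simp only [hφ, Finset.mem_product]
      exact ⟨⟨hmemQ a S₁ hS₁sub hS₁card (by omega) (by omega),
              hmemQ b S₂ hS₂sub hS₂card (by omega) (by omega)⟩,
             hmemQ b' S₁ hS₁sub hS₁card (by omega) (by omega),
             hmemQ (a + b - b') S₂ hS₂sub hS₂card (by omega) (by omega)⟩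
    · simp only [hφ]
      rw [distSet_trans a S₁ hpos₁, distSet_trans b S₂ hpos₂, distSet_trans b' S₁ hpos₁,
          distSet_trans _ S₂ hpos₂, minOf_trans a S₁ hpos₁, minOf_trans b S₂ hpos₂,
          minOf_trans b' S₁ hpos₁, minOf_trans _ S₂ hpos₂]
      refine ⟨insert_zero_ne hpos₁ hpos₂ hS₁₂, rfl, rfl, by omega, by omega, by omega,
        by omega, by omega, by omega, ?_⟩
      have hb'' : b' + (a + b - b') = a + b := by ring
      rw [add_add_add_comm]
      conv_rhs => rw [add_add_add_comm]
      rw [Finset.singleton_add_singleton, Finset.singleton_add_singleton, hb'']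
  -- injectivity
  have hinj : Set.InjOn φ P := by
    intro p hp q hq hpq
    obtain ⟨⟨S₁, S₂⟩, a, b, b'⟩ := p
    obtain ⟨⟨T₁, T₂⟩, x, y, z⟩ := q
    simp only [Finset.mem_coe, hP, hT, hP1, Finset.mem_product, Finset.mem_offDiag,
      Finset.mem_powersetCard, Finset.mem_Icc] at hp hq
    obtain ⟨⟨⟨hS₁sub, _⟩, ⟨hS₂sub, _⟩, _⟩, _⟩ := hp
    obtain ⟨⟨⟨hT₁sub, _⟩, ⟨hT₂sub, _⟩, _⟩, _⟩ := hq
    have hpos₁ : ∀ u ∈ S₁, 1 ≤ u := fun u hu => (Finset.mem_Icc.1 (hS₁sub hu)).1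
    have hpos₂ : ∀ u ∈ S₂, 1 ≤ u := fun u hu => (Finset.mem_Icc.1 (hS₂sub hu)).1
    have hpos₃ : ∀ u ∈ T₁, 1 ≤ u := fun u hu => (Finset.mem_Icc.1 (hT₁sub hu)).1
    have hpos₄ : ∀ u ∈ T₂, 1 ≤ u := fun u hu => (Finset.mem_Icc.1 (hT₂sub hu)).1
    simp only [hφ, Prod.mk.injEq] at hpq
    obtain ⟨⟨h1, h2⟩, h3, h4⟩ := hpq
    obtain ⟨ha, hS⟩ := trans_inj hpos₁ hpos₃ h1
    obtain ⟨hb, hT'⟩ := trans_inj hpos₂ hpos₄ h2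
    obtain ⟨hb', -⟩ := trans_inj hpos₁ hpos₃ h3
    simp only [Prod.mk.injEq]
    exact ⟨⟨hS, hT'⟩, ha, hb, hb'⟩
  -- cardinality computations
  have c1 : (Finset.Icc (1:ℤ) Mz).card = M := by rw [Int.card_Icc]; omega
  have c2 : (Finset.Icc (4*Mz+1) (5*Mz)).card = M := by rw [Int.card_Icc]; omega
  have c3 : (Finset.Icc (Mz+1) (2*Mz)).card = M := by rw [Int.card_Icc]; omega
  set n := M.choose (k-1) with hn
  have hP1card : P1.card = n := by rw [hP1, Finset.card_powersetCard, c1]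
  have hPcard : P.card = (n*n - n) * (M * (M * M)) := by
    rw [hP, Finset.card_product, Finset.offDiag_card, hP1card, hT, Finset.card_product,
      Finset.card_product, c2, c1, c3]
  have hn2 : 2 ≤ n := by
    rw [← hP1card]
    apply Finset.one_lt_card.2
    refine ⟨Finset.Icc (1:ℤ) ((k:ℤ)-1), ?_, Finset.Icc (2:ℤ) (k:ℤ), ?_, ?_⟩
    · rw [hP1, Finset.mem_powersetCard]
      exact ⟨Finset.Icc_subset_Icc le_rfl hkz, by rw [Int.card_Icc]; omega⟩
    · rw [hP1, Finset.mem_powersetCard]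
      refine ⟨Finset.Icc_subset_Icc (by omega) (by omega), by rw [Int.card_Icc]; omega⟩
    · intro h
      have h1 : (1:ℤ) ∈ Finset.Icc (1:ℤ) ((k:ℤ)-1) := by rw [Finset.mem_Icc]; omega
      rw [h, Finset.mem_Icc] at h1
      omega
  -- real-number estimates
  have hchoose := Nat.pow_le_choose (k-1) M (α := ℝ)
  have hX : ((M:ℝ))/2 ≤ ((M + 1 - (k-1) : ℕ) : ℝ) := by
    have h' : M ≤ 2 * (M + 1 - (k-1)) := by omega
    have h'' : (M:ℝ) ≤ 2 * ((M + 1 - (k-1) : ℕ) : ℝ) := by exact_mod_cast h'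
    linarith
  have h3 : ((M + 1 - (k-1) : ℕ) : ℝ)^(k-1) ≤ ((k-1).factorial : ℝ) * (n:ℝ) := by
    rw [div_le_iff₀ hq0] at hchoose
    push_cast at hchoose ⊢
    calc ((M + 1 - (k-1) : ℕ) : ℝ)^(k-1) ≤ (n:ℝ) * ((k-1).factorial : ℝ) := by
          convert hchoose using 2 <;> push_cast <;> ring_nf
      _ = ((k-1).factorial : ℝ) * (n:ℝ) := by ring
  have key1 : (M:ℝ)^(k-1) ≤ (2^(k-1) * ((k-1).factorial : ℝ)) * (n:ℝ) := by
    calc (M:ℝ)^(k-1) = 2^(k-1) * ((M:ℝ)/2)^(k-1) := by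
          rw [← mul_pow]; congr 1; ring
      _ ≤ 2^(k-1) * ((M + 1 - (k-1) : ℕ) : ℝ)^(k-1) := by
          have h0 : (0:ℝ) ≤ (M:ℝ)/2 := by positivity
          gcongr
      _ ≤ 2^(k-1) * (((k-1).factorial : ℝ) * (n:ℝ)) := by gcongr
      _ = (2^(k-1) * ((k-1).factorial : ℝ)) * (n:ℝ) := by ring
  have hexp : 2*k+1 = (k-1)*2 + 3 := by omega
  have key2 : (M:ℝ)^(2*k+1) ≤ ((2^(k-1) * ((k-1).factorial : ℝ)) * (n:ℝ))^2 * (M:ℝ)^3 := by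
    rw [hexp, pow_add, pow_mul]
    have h0 : (0:ℝ) ≤ (M:ℝ)^(k-1) := by positivity
    gcongr
  have h2pow : (2:ℝ)^(2*k+1) = ((2:ℝ)^(k-1))^2 * 8 := by
    rw [hexp, pow_add, pow_mul]; norm_num
  have hn2R : (2:ℝ) ≤ (n:ℝ) := by exact_mod_cast hn2
  have hfin : (n:ℝ)^2/8 ≤ (n:ℝ)*(n:ℝ) - (n:ℝ) := by nlinarith
  -- final chain
  have hQcard : P.card ≤ Q.card := Finset.card_le_card_of_injOn φ hmem hinj
  have hnn : n ≤ n * n := Nat.le_mul_of_pos_left n (by omega)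
  calc 1 / (7^(2*k+1) * 2^(2*k+1) * (((k-1).factorial : ℝ))^2) * (N : ℝ) ^ (2 * k + 1)
      ≤ 1 / (7^(2*k+1) * 2^(2*k+1) * (((k-1).factorial : ℝ))^2) * (7*(M:ℝ)) ^ (2 * k + 1) := by
        have h7 : (N:ℝ) ≤ 7 * (M:ℝ) := by exact_mod_cast h7M
        have h0 : (0:ℝ) ≤ (N:ℝ) := by positivity
        gcongr
    _ = (M:ℝ)^(2*k+1) / (2^(2*k+1) * (((k-1).factorial : ℝ))^2) := by
        rw [mul_pow]
        field_simp
    _ ≤ (((2^(k-1) * ((k-1).factorial : ℝ)) * (n:ℝ))^2 * (M:ℝ)^3) /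
          (2^(2*k+1) * (((k-1).factorial : ℝ))^2) := by gcongr
    _ = ((n:ℝ)^2/8) * (M:ℝ)^3 := by
        rw [h2pow]
        field_simp
    _ ≤ ((n:ℝ)*(n:ℝ) - (n:ℝ)) * (M:ℝ)^3 := by
        have hM3 : (0:ℝ) ≤ (M:ℝ)^3 := by positivity
        exact mul_le_mul_of_nonneg_right hfin hM3
    _ = (((n*n - n) * (M * (M * M)) : ℕ) : ℝ) := by
        push_cast [Nat.cast_sub hnn]
        ring
    _ ≤ ((Q.card : ℕ) : ℝ) := by
        rw [← hPcard]
        exact_mod_cast hQcard
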